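/- For real numbers s with s > 3/4 and the annulus indicator χ_{|ξ|=T+O(1)} (characteristic function of {ξ ∈ ℝ^3 : | |ξ| − T | ≤ C}), the convolution bound sup_{T ∈ ℕ} ‖ χ_{|ξ|=T+O(1)} ∗ ⟨·⟩^{−2(s+1/4)} ‖_{L^∞(ℝ^3)} < ∞ holds; i.e., the convolution of the annulus indicator with ⟨ξ⟩^{−2s−1/2} is bounded uniformly in T. -/

import Mathlib

open MeasureTheory ENNReal

noncomputable section

local notation "E3" => EuclideanSpace ℝ (Fin 3)

lemma slice_bound (C T r ρ2 : ℝ) (hC : 0 < C) (hr : 1 ≤ r) (hT : 2*C + 2*r < T)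
    (hρ : 0 ≤ ρ2) (hρr : ρ2 ≤ r^2) :
    volume {t : ℝ | (T-C)^2 ≤ t^2 + ρ2 ∧ t^2 + ρ2 ≤ (T+C)^2} ≤ ENNReal.ofReal (8*C) := by
  set B := (T-C)^2 - ρ2 with hBdef
  set A := (T+C)^2 - ρ2 with hAdef
  have hB : (T/2)^2 ≤ B := by nlinarith
  have hB0 : 0 ≤ B := le_trans (by positivity) hB
  have hsB : T/2 ≤ Real.sqrt B := by
    have := Real.sqrt_le_sqrt hB
    rwa [Real.sqrt_sq (by nlinarith)] at this
  have hA0 : 0 ≤ A := by nlinarith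
  have hAB : A ≤ (Real.sqrt B + 4*C)^2 := by
    have h1 : Real.sqrt B ^ 2 = B := Real.sq_sqrt hB0
    nlinarith [Real.sqrt_nonneg B]
  have hsA : Real.sqrt A ≤ Real.sqrt B + 4*C := by
    have := Real.sqrt_le_sqrt hAB
    rwa [Real.sqrt_sq (by positivity)] at this
  have hsub : {t : ℝ | (T-C)^2 ≤ t^2 + ρ2 ∧ t^2 + ρ2 ≤ (T+C)^2} ⊆
      Set.Icc (-Real.sqrt A) (-Real.sqrt B) ∪ Set.Icc (Real.sqrt B) (Real.sqrt A) := by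
    rintro t ⟨h1, h2⟩
    have ht2B : B ≤ t^2 := by linarith
    have ht2A : t^2 ≤ A := by linarith
    have habs1 : |t| ≤ Real.sqrt A := by
      have := Real.sqrt_le_sqrt ht2A; rwa [Real.sqrt_sq_eq_abs] at this
    have habs2 : Real.sqrt B ≤ |t| := by
      have := Real.sqrt_le_sqrt ht2B; rwa [Real.sqrt_sq_eq_abs] at this
    rcases le_total 0 t with ht | ht
    · right; rw [abs_of_nonneg ht] at habs1 habs2; exact ⟨habs2, habs1⟩
    · left; rw [abs_of_nonpos ht] at habs1 habs2
      exact ⟨by linarith, by linarith⟩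
  calc volume {t : ℝ | (T-C)^2 ≤ t^2 + ρ2 ∧ t^2 + ρ2 ≤ (T+C)^2}
      ≤ volume (Set.Icc (-Real.sqrt A) (-Real.sqrt B) ∪ Set.Icc (Real.sqrt B) (Real.sqrt A)) :=
        measure_mono hsub
    _ ≤ volume (Set.Icc (-Real.sqrt A) (-Real.sqrt B)) + volume (Set.Icc (Real.sqrt B) (Real.sqrt A)) :=
        measure_union_le _ _
    _ ≤ ENNReal.ofReal (4*C) + ENNReal.ofReal (4*C) := by
        rw [Real.volume_Icc, Real.volume_Icc]
        gcongr <;> linarith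
    _ = ENNReal.ofReal (8*C) := by rw [← ENNReal.ofReal_add (by positivity) (by positivity)]; ring_nf

lemma cyl_bound (C T r : ℝ) (hC : 0 < C) (hr : 1 ≤ r) (hT : 2*C + 2*r < T) :
    volume {v : Fin 3 → ℝ | (v 1)^2 + (v 2)^2 ≤ r^2 ∧
      (T-C)^2 ≤ (v 0)^2 + ((v 1)^2 + (v 2)^2) ∧ (v 0)^2 + ((v 1)^2 + (v 2)^2) ≤ (T+C)^2} ≤
      ENNReal.ofReal (32*C*r^2) := by
  set P₂ : Set (ℝ × (Fin 2 → ℝ)) := {p | (p.2 0)^2 + (p.2 1)^2 ≤ r^2 ∧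
      (T-C)^2 ≤ p.1^2 + ((p.2 0)^2 + (p.2 1)^2) ∧
      p.1^2 + ((p.2 0)^2 + (p.2 1)^2) ≤ (T+C)^2} with hP₂
  have hm1 : Measurable fun p : ℝ × (Fin 2 → ℝ) => (p.2 0)^2 + (p.2 1)^2 :=
    (((measurable_pi_apply 0).comp measurable_snd).pow_const 2).add
      (((measurable_pi_apply 1).comp measurable_snd).pow_const 2)
  have hm2 : Measurable fun p : ℝ × (Fin 2 → ℝ) => p.1^2 + ((p.2 0)^2 + (p.2 1)^2) :=
    (measurable_fst.pow_const 2).add hm1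
  have hP₂m : MeasurableSet P₂ :=
    ((measurableSet_le hm1 measurable_const).inter
      ((measurableSet_le measurable_const hm2).inter (measurableSet_le hm2 measurable_const)))
  have hpre : {v : Fin 3 → ℝ | (v 1)^2 + (v 2)^2 ≤ r^2 ∧
      (T-C)^2 ≤ (v 0)^2 + ((v 1)^2 + (v 2)^2) ∧ (v 0)^2 + ((v 1)^2 + (v 2)^2) ≤ (T+C)^2}
      = (MeasurableEquiv.piFinSuccAbove (fun _ : Fin 3 => ℝ) 0) ⁻¹' P₂ := rfl
  rw [hpre, (volume_preserving_piFinSuccAbove (fun _ : Fin 3 => ℝ) 0).measure_preimage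
    hP₂m.nullMeasurableSet]
  rw [Measure.volume_eq_prod, Measure.prod_apply_symm hP₂m]
  have hbd : ∀ w : Fin 2 → ℝ, volume ((fun t => (t, w)) ⁻¹' P₂) ≤
      Set.indicator (Set.pi Set.univ fun _ : Fin 2 => Set.Icc (-r) r)
        (fun _ => ENNReal.ofReal (8*C)) w := by
    intro w
    by_cases hw : (w 0)^2 + (w 1)^2 ≤ r^2
    · have hmem : w ∈ Set.pi Set.univ fun _ : Fin 2 => Set.Icc (-r) r := by
        have h0 : w 0 ∈ Set.Icc (-r) r := by
          constructor <;> nlinarith [sq_nonneg (w 0), sq_nonneg (w 1)]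
        have h1 : w 1 ∈ Set.Icc (-r) r := by
          constructor <;> nlinarith [sq_nonneg (w 0), sq_nonneg (w 1)]
        intro i _
        fin_cases i
        · exact h0
        · exact h1
      rw [Set.indicator_of_mem hmem]
      have : (fun t => (t, w)) ⁻¹' P₂ =
          {t : ℝ | (T-C)^2 ≤ t^2 + ((w 0)^2 + (w 1)^2) ∧ t^2 + ((w 0)^2 + (w 1)^2) ≤ (T+C)^2} := by
        ext t; simp only [hP₂, Set.mem_preimage, Set.mem_setOf_eq]
        exact ⟨fun h => h.2, fun h => ⟨hw, h⟩⟩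
      rw [this]
      exact slice_bound C T r _ hC hr hT (by positivity) hw
    · have : (fun t => (t, w)) ⁻¹' P₂ = ∅ := by
        ext t; simp only [hP₂, Set.mem_preimage, Set.mem_setOf_eq, Set.mem_empty_iff_false]
        tauto
      simp [this]
  calc ∫⁻ w, volume ((fun t => (t, w)) ⁻¹' P₂) ∂volume
      ≤ ∫⁻ w, Set.indicator (Set.pi Set.univ fun _ : Fin 2 => Set.Icc (-r) r)
          (fun _ => ENNReal.ofReal (8*C)) w ∂volume := lintegral_mono hbd
    _ = ENNReal.ofReal (8*C) * volume (Set.pi Set.univ fun _ : Fin 2 => Set.Icc (-r) r) := by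
        rw [lintegral_indicator_const (MeasurableSet.univ_pi fun _ => measurableSet_Icc)]
    _ ≤ ENNReal.ofReal (32*C*r^2) := by
        rw [volume_pi_pi, Real.volume_Icc]
        rw [Finset.prod_const]
        have : (Finset.univ : Finset (Fin 2)).card = 2 := rfl
        rw [this, ← ENNReal.ofReal_pow (by linarith), ← ENNReal.ofReal_mul (by positivity)]
        apply ENNReal.ofReal_le_ofReal; nlinarith

lemma sset_bound (C T r : ℝ) (u : E3) (hu1 : ‖u‖ = 1) (hC : 0 < C) (hr : 1 ≤ r)
    (hT : 2*C + 2*r < T) :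
    volume {y : E3 | ‖y‖^2 - (inner ℝ u y : ℝ)^2 ≤ r^2 ∧ (T-C)^2 ≤ ‖y‖^2 ∧ ‖y‖^2 ≤ (T+C)^2} ≤
      ENNReal.ofReal (32*C*r^2) := by
  have hScont : Continuous fun y : E3 => (inner ℝ u y : ℝ) :=
    Continuous.inner continuous_const continuous_id
  have hSm : MeasurableSet {y : E3 | ‖y‖^2 - (inner ℝ u y : ℝ)^2 ≤ r^2 ∧
      (T-C)^2 ≤ ‖y‖^2 ∧ ‖y‖^2 ≤ (T+C)^2} := by
    refine (measurableSet_le (((continuous_norm.pow 2).sub (hScont.pow 2)).measurable)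
      measurable_const).inter ?_
    exact (measurableSet_le measurable_const ((continuous_norm.pow 2).measurable)).inter
      (measurableSet_le ((continuous_norm.pow 2).measurable) measurable_const)
  have hE₀ : ‖(EuclideanSpace.single (0 : Fin 3) (1:ℝ))‖ = 1 := by
    rw [EuclideanSpace.norm_single]; norm_num
  set R := Submodule.reflection (ℝ ∙ ((EuclideanSpace.single (0 : Fin 3) (1:ℝ)) - u))ᗮ with hRdef
  have hRE : R (EuclideanSpace.single (0 : Fin 3) (1:ℝ)) = u := Submodule.reflection_sub (by rw [hE₀, hu1])
  rw [← (LinearIsometryEquiv.measurePreserving R).measure_preimage hSm.nullMeasurableSet]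
  have hnorm : ∀ z : E3, ‖z‖^2 = (z 0)^2 + ((z 1)^2 + (z 2)^2) := by
    intro z
    rw [EuclideanSpace.norm_eq, Real.sq_sqrt (by positivity)]
    simp [Fin.sum_univ_three, sq_abs]
    ring
  have hPpim : MeasurableSet {v : Fin 3 → ℝ | (v 1)^2 + (v 2)^2 ≤ r^2 ∧
      (T-C)^2 ≤ (v 0)^2 + ((v 1)^2 + (v 2)^2) ∧ (v 0)^2 + ((v 1)^2 + (v 2)^2) ≤ (T+C)^2} := by
    have hm1 : Measurable fun v : Fin 3 → ℝ => (v 1)^2 + (v 2)^2 :=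
      ((measurable_pi_apply 1).pow_const 2).add ((measurable_pi_apply 2).pow_const 2)
    have hm2 : Measurable fun v : Fin 3 → ℝ => (v 0)^2 + ((v 1)^2 + (v 2)^2) :=
      ((measurable_pi_apply 0).pow_const 2).add hm1
    exact (measurableSet_le hm1 measurable_const).inter
      ((measurableSet_le measurable_const hm2).inter (measurableSet_le hm2 measurable_const))
  have hpre2 : ⇑R ⁻¹' {y : E3 | ‖y‖^2 - (inner ℝ u y : ℝ)^2 ≤ r^2 ∧
        (T-C)^2 ≤ ‖y‖^2 ∧ ‖y‖^2 ≤ (T+C)^2}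
      = ⇑(MeasurableEquiv.toLp 2 (Fin 3 → ℝ)).symm ⁻¹'
        {v : Fin 3 → ℝ | (v 1)^2 + (v 2)^2 ≤ r^2 ∧
          (T-C)^2 ≤ (v 0)^2 + ((v 1)^2 + (v 2)^2) ∧ (v 0)^2 + ((v 1)^2 + (v 2)^2) ≤ (T+C)^2} := by
    ext z
    have h1 : ‖R z‖ = ‖z‖ := R.norm_map z
    have h2 : (inner ℝ u (R z) : ℝ) = z 0 := by
      rw [← hRE, LinearIsometryEquiv.inner_map_map, EuclideanSpace.inner_single_left]
      simp
    simp only [Set.mem_preimage, Set.mem_setOf_eq, h1, h2]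
    have h3 := hnorm z
    have h4 : ∀ i : Fin 3, (MeasurableEquiv.toLp 2 (Fin 3 → ℝ)).symm z i = z i := fun _ => rfl
    rw [h4 0, h4 1, h4 2]
    constructor
    · rintro ⟨g1, g2, g3⟩; exact ⟨by nlinarith, by nlinarith, by nlinarith⟩
    · rintro ⟨g1, g2, g3⟩; exact ⟨by nlinarith, by nlinarith, by nlinarith⟩
  rw [hpre2, (EuclideanSpace.volume_preserving_symm_measurableEquiv_toLp (Fin 3)).measure_preimage
    hPpim.nullMeasurableSet]
  exact cyl_bound C T r hC hr hT

set_option maxHeartbeats 1600000 in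
lemma key (C : ℝ) (hC : 0 < C) : ∃ κ : ℝ, 0 < κ ∧ ∀ (T : ℕ) (x : E3) (r : ℝ), 1 ≤ r →
    volume ({y : E3 | |‖y‖ - (T:ℝ)| ≤ C} ∩ Metric.closedBall x r) ≤ ENNReal.ofReal (κ * r^2) := by
  set gg : ℝ := Real.sqrt Real.pi ^ 3 / Real.Gamma (3/2 + 1) with hgg
  have hgg0 : 0 ≤ gg := by
    apply div_nonneg (by positivity)
    exact (Real.Gamma_pos_of_pos (by norm_num)).le
  refine ⟨gg*(6*C*(2*C+2)^2 + 2*C^3) + gg*(8*C^3) + 32*C + 1, by positivity, ?_⟩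
  intro T x r hr
  have hr0 : (0:ℝ) < r := by linarith
  have hvolball : ∀ (R : ℝ), 0 ≤ R → volume (Metric.closedBall (0:E3) R)
      = ENNReal.ofReal (R^3 * gg) := by
    intro R hR
    rw [EuclideanSpace.volume_closedBall]
    simp only [Fintype.card_fin]
    rw [← ENNReal.ofReal_pow hR, ← ENNReal.ofReal_mul (by positivity)]
    norm_num [hgg]
  have hvolball' : ∀ (R : ℝ), (0 ≤ R ∧ volume (Metric.ball (0:E3) R)
      = ENNReal.ofReal (R^3 * gg)) ∨ (R < 0 ∧ volume (Metric.ball (0:E3) R) = 0) := by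
    intro R
    rcases le_or_gt 0 R with h | h
    · left
      refine ⟨h, ?_⟩
      rw [EuclideanSpace.volume_ball]
      simp only [Fintype.card_fin]
      rw [← ENNReal.ofReal_pow h, ← ENNReal.ofReal_mul (by positivity)]
      norm_num [hgg]
    · right
      exact ⟨h, by rw [Metric.ball_eq_empty.mpr h.le]; simp⟩
  by_cases hcase : (T:ℝ) ≤ 2*C + 2*r
  · -- annulus volume bound
    have hsub : {y : E3 | |‖y‖ - (T:ℝ)| ≤ C} ∩ Metric.closedBall x r ⊆
        Metric.closedBall (0:E3) ((T:ℝ)+C) \ Metric.ball (0:E3) ((T:ℝ)-C) := by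
      rintro y ⟨hy, -⟩
      rw [Set.mem_setOf_eq, abs_le] at hy
      constructor
      · rw [Metric.mem_closedBall, dist_zero_right]; linarith
      · rw [Metric.mem_ball, dist_zero_right]; push_neg; linarith
    have hTC0 : (0:ℝ) ≤ (T:ℝ) + C := by positivity
    have hdiff : volume (Metric.closedBall (0:E3) ((T:ℝ)+C) \ Metric.ball (0:E3) ((T:ℝ)-C))
        = volume (Metric.closedBall (0:E3) ((T:ℝ)+C)) - volume (Metric.ball (0:E3) ((T:ℝ)-C)) := by
      apply measure_diff
      · exact (Metric.ball_subset_ball (by linarith)).trans Metric.ball_subset_closedBall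
      · exact measurableSet_ball.nullMeasurableSet
      · exact (measure_ball_lt_top).ne
    refine le_trans (measure_mono hsub) ?_
    rw [hdiff, hvolball _ hTC0]
    have hbound : ∀ vb : ℝ≥0∞, vb = volume (Metric.ball (0:E3) ((T:ℝ)-C)) →
        ENNReal.ofReal (((T:ℝ)+C)^3 * gg) - vb ≤
        ENNReal.ofReal ((gg*(6*C*(2*C+2)^2 + 2*C^3) + gg*(8*C^3) + 32*C + 1) * r^2) := by
      intro vb hvb
      have hT0 : (0:ℝ) ≤ T := Nat.cast_nonneg T
      have hrr : (1:ℝ) ≤ r^2 := by nlinarith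
      rcases hvolball' ((T:ℝ)-C) with ⟨hpos, h⟩ | ⟨hneg, h⟩
      · rw [hvb, h, ← ENNReal.ofReal_sub _ (by positivity)]
        apply ENNReal.ofReal_le_ofReal
        have hTC : (T:ℝ) ≤ (2*C+2)*r := by nlinarith
        have h2 : (T:ℝ)^2 ≤ (2*C+2)^2*r^2 := by nlinarith
        have h3 : 6*(T:ℝ)^2*C + 2*C^3 ≤ 6*C*(2*C+2)^2*r^2 + 2*C^3*r^2 := by
          nlinarith [mul_le_mul_of_nonneg_left h2 (by positivity : (0:ℝ) ≤ 6*C),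
            mul_le_mul_of_nonneg_left hrr (by positivity : (0:ℝ) ≤ 2*C^3)]
        have h4 : ((T:ℝ)+C)^3*gg - ((T:ℝ)-C)^3*gg = (6*(T:ℝ)^2*C + 2*C^3)*gg := by ring
        have h5 : (6*(T:ℝ)^2*C + 2*C^3)*gg ≤ (6*C*(2*C+2)^2*r^2 + 2*C^3*r^2)*gg :=
          mul_le_mul_of_nonneg_right h3 hgg0
        nlinarith [mul_nonneg (mul_nonneg hgg0 (by positivity : (0:ℝ) ≤ 8*C^3)) (le_trans zero_le_one hrr),
          mul_nonneg (by positivity : (0:ℝ) ≤ 32*C+1) (le_trans zero_le_one hrr)]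
      · rw [hvb, h, tsub_zero]
        apply ENNReal.ofReal_le_ofReal
        have hTC : (T:ℝ) + C ≤ 2*C := by linarith
        have h4 : ((T:ℝ)+C)^3 ≤ (2*C)^3 := pow_le_pow_left₀ hTC0 hTC 3
        have h5 : ((T:ℝ)+C)^3*gg ≤ (2*C)^3*gg := mul_le_mul_of_nonneg_right h4 hgg0
        have h6 : gg*(8*C^3) ≤ gg*(8*C^3)*r^2 := by
          nlinarith [mul_nonneg hgg0 (by positivity : (0:ℝ) ≤ 8*C^3)]
        nlinarith [mul_nonneg (mul_nonneg hgg0 (by positivity : (0:ℝ) ≤ 6*C*(2*C+2)^2 + 2*C^3)) (le_trans zero_le_one hrr),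
          mul_nonneg (by positivity : (0:ℝ) ≤ 32*C+1) (le_trans zero_le_one hrr)]
    exact hbound _ rfl
  · push_neg at hcase
    rcases Set.eq_empty_or_nonempty ({y : E3 | |‖y‖ - (T:ℝ)| ≤ C} ∩ Metric.closedBall x r)
      with hemp | ⟨y₀, hy₀, hy₀b⟩
    · rw [hemp]; simp
    · rw [Metric.mem_closedBall] at hy₀b
      rw [Set.mem_setOf_eq, abs_le] at hy₀
      have hx0 : C + r < ‖x‖ := by
        have h1 : ‖y₀‖ - ‖x‖ ≤ dist y₀ x := by
          rw [dist_eq_norm]; exact norm_sub_norm_le y₀ x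
        linarith [hy₀.1]
      have hxne : x ≠ 0 := by
        intro h; rw [h, norm_zero] at hx0; linarith
      have hu1 : ‖(‖x‖⁻¹ • x : E3)‖ = 1 := norm_smul_inv_norm hxne
      have hsub2 : {y : E3 | |‖y‖ - (T:ℝ)| ≤ C} ∩ Metric.closedBall x r ⊆
          {y : E3 | ‖y‖^2 - (inner ℝ (‖x‖⁻¹ • x : E3) y : ℝ)^2 ≤ r^2 ∧
            ((T:ℝ)-C)^2 ≤ ‖y‖^2 ∧ ‖y‖^2 ≤ ((T:ℝ)+C)^2} := by
        rintro y ⟨hyA, hyB⟩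
        rw [Set.mem_setOf_eq, abs_le] at hyA
        rw [Metric.mem_closedBall] at hyB
        have hd : ‖y - x‖ ≤ r := by rw [← dist_eq_norm]; exact hyB
        have hd2 : ‖y - x‖^2 ≤ r^2 := by nlinarith [norm_nonneg (y - x)]
        have hexp : ‖y - x‖^2 = ‖y‖^2 - 2*(inner ℝ y x : ℝ) + ‖x‖^2 := norm_sub_sq_real y x
        have hxu : ‖x‖ • (‖x‖⁻¹ • x : E3) = x := smul_inv_smul₀ (norm_ne_zero_iff.mpr hxne) x
        have hix : (inner ℝ y x : ℝ) = ‖x‖ * (inner ℝ (‖x‖⁻¹ • x : E3) y : ℝ) := by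
          conv_lhs => rw [real_inner_comm, ← hxu]
          rw [real_inner_smul_left]
        refine ⟨?_, by nlinarith [norm_nonneg y], by nlinarith [norm_nonneg y]⟩
        nlinarith [sq_nonneg ((inner ℝ (‖x‖⁻¹ • x : E3) y : ℝ) - ‖x‖)]
      refine le_trans (measure_mono hsub2) ?_
      refine le_trans (sset_bound C (T:ℝ) r _ hu1 hC hr hcase) ?_
      apply ENNReal.ofReal_le_ofReal
      have hrr : (1:ℝ) ≤ r^2 := by nlinarith
      nlinarith [mul_nonneg (mul_nonneg hgg0 (by positivity : (0:ℝ) ≤ 6*C*(2*C+2)^2 + 2*C^3)) (le_trans zero_le_one hrr),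
        mul_nonneg (mul_nonneg hgg0 (by positivity : (0:ℝ) ≤ 8*C^3)) (le_trans zero_le_one hrr)]

set_option maxHeartbeats 1000000 in
theorem stmt14 (s C : ℝ) (hs : s > 3/4) (hC : 0 < C) :
    ∃ K : ℝ, ∀ (T : ℕ) (x : EuclideanSpace ℝ (Fin 3)),
      (∫ y : EuclideanSpace ℝ (Fin 3),
        Set.indicator {y : EuclideanSpace ℝ (Fin 3) | |‖y‖ - (T : ℝ)| ≤ C}
          (fun _ => (1 : ℝ)) y * (1 + ‖x - y‖ ^ 2) ^ (-(s + 1/4))) ≤ K := by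
  obtain ⟨κ, hκ, hvol⟩ := key C hC
  set q : ℝ := s + 1/4 with hq
  have hq1 : 1 < q := by rw [hq]; linarith
  set ρ : ℝ := (4:ℝ) ^ (1 - q) with hρdef
  have hρ0 : 0 ≤ ρ := Real.rpow_nonneg (by norm_num) _
  have hρ1 : ρ < 1 := Real.rpow_lt_one_of_one_lt_of_neg (by norm_num) (by linarith)
  set Λ : ℝ≥0∞ := ENNReal.ofReal (4*κ) * (1 - ENNReal.ofReal ρ)⁻¹ with hΛ
  have hsubpos : (0:ℝ≥0∞) < 1 - ENNReal.ofReal ρ :=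
    tsub_pos_iff_lt.mpr (ENNReal.ofReal_lt_one.mpr hρ1)
  have hΛtop : Λ ≠ ⊤ :=
    ENNReal.mul_ne_top ENNReal.ofReal_ne_top (ENNReal.inv_ne_top.mpr hsubpos.ne')
  refine ⟨Λ.toReal, ?_⟩
  intro T x
  set A : Set (EuclideanSpace ℝ (Fin 3)) := {y | |‖y‖ - (T:ℝ)| ≤ C} with hA
  have hAm : MeasurableSet A :=
    measurableSet_le ((continuous_norm.sub continuous_const).abs.measurable) measurable_const
  set f : EuclideanSpace ℝ (Fin 3) → ℝ :=
    fun y => Set.indicator A (fun _ => (1:ℝ)) y * (1 + ‖x - y‖ ^ 2) ^ (-q) with hf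
  have hw : ∀ y : EuclideanSpace ℝ (Fin 3), (0:ℝ) < 1 + ‖x - y‖^2 := fun y => by positivity
  have hfnn : ∀ y, 0 ≤ f y := fun y =>
    mul_nonneg (Set.indicator_nonneg (fun _ _ => zero_le_one) y) (Real.rpow_nonneg (hw y).le _)
  have hfm : Measurable f := by
    apply Measurable.mul (measurable_const.indicator hAm)
    have hcont : Continuous fun y : EuclideanSpace ℝ (Fin 3) => (1 + ‖x - y‖^2) ^ (-q) := by
      apply Continuous.rpow_const (by continuity)
      intro y; left; exact (hw y).ne'
    exact hcont.measurable
  set g : ℕ → EuclideanSpace ℝ (Fin 3) → ℝ≥0∞ := fun j =>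
    Set.indicator (A ∩ Metric.closedBall x (2^(j+1)))
      (fun _ => ENNReal.ofReal (((4:ℝ)^j) ^ (-q))) with hg
  have hgm : ∀ j, Measurable (g j) := fun j =>
    measurable_const.indicator (hAm.inter measurableSet_closedBall)
  have hpoint : ∀ y, ENNReal.ofReal (f y) ≤ ∑' j, g j y := by
    intro y
    by_cases hyA : y ∈ A
    · have hfy : f y = (1 + ‖x - y‖^2) ^ (-q) := by
        rw [hf]; simp [Set.indicator_of_mem hyA]
      obtain ⟨j, hj1, hj2⟩ : ∃ j : ℕ, ‖x - y‖ ≤ 2^(j+1) ∧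
          (1 + ‖x-y‖^2)^(-q) ≤ ((4:ℝ)^j)^(-q) := by
        rcases le_or_gt ‖x - y‖ 2 with h | h
        · refine ⟨0, by norm_num [h], ?_⟩
          simp only [pow_zero, Real.one_rpow]
          exact Real.rpow_le_one_of_one_le_of_nonpos
            (by nlinarith [sq_nonneg ‖x-y‖]) (by linarith)
        · set n : ℕ := ⌊‖x - y‖⌋₊ with hn
          have hn2 : 2 ≤ n := Nat.le_floor (by exact_mod_cast h.le)
          have hn0 : n ≠ 0 := by omega
          set j := Nat.log 2 n with hj
          have h2j : (2:ℕ)^j ≤ n := Nat.pow_log_le_self 2 hn0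
          have h2j' : n < 2^(j+1) := Nat.lt_pow_succ_log_self (by norm_num) n
          have hle : (2:ℝ)^j ≤ ‖x - y‖ := by
            have h1 : ((2:ℕ)^j : ℝ) ≤ (n:ℝ) := by exact_mod_cast h2j
            have h2 : (n:ℝ) ≤ ‖x - y‖ := Nat.floor_le (norm_nonneg _)
            push_cast at h1; linarith
          have hlt : ‖x - y‖ ≤ (2:ℝ)^(j+1) := by
            have h1 : ‖x - y‖ < (n:ℝ) + 1 := Nat.lt_floor_add_one _
            have h3 : ((n:ℝ)+1) ≤ ((2:ℕ)^(j+1) : ℝ) := by exact_mod_cast Nat.succ_le_of_lt h2j'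
            push_cast at h3; linarith
          refine ⟨j, hlt, ?_⟩
          have h2jnn : (0:ℝ) ≤ (2:ℝ)^j := by positivity
          have hbase : ((4:ℝ)^j) ≤ 1 + ‖x - y‖^2 := by
            have h4 : ((4:ℝ)^j) = ((2:ℝ)^j)^2 := by
              rw [← pow_mul, mul_comm, pow_mul]; norm_num
            nlinarith
          exact Real.rpow_le_rpow_of_nonpos (by positivity) hbase (by linarith)
      have hyball : y ∈ Metric.closedBall x (2^(j+1)) := by
        rw [Metric.mem_closedBall, dist_comm, dist_eq_norm]; exact hj1
      have hmem : y ∈ A ∩ Metric.closedBall x (2^(j+1)) := ⟨hyA, hyball⟩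
      calc ENNReal.ofReal (f y) ≤ ENNReal.ofReal (((4:ℝ)^j)^(-q)) := by
            rw [hfy]; exact ENNReal.ofReal_le_ofReal hj2
        _ = g j y := by
            show ENNReal.ofReal (((4:ℝ)^j) ^ (-q)) = Set.indicator (A ∩ Metric.closedBall x (2^(j+1)))
              (fun _ => ENNReal.ofReal (((4:ℝ)^j) ^ (-q))) y
            exact (Set.indicator_of_mem hmem (fun _ => ENNReal.ofReal (((4:ℝ)^j) ^ (-q)))).symm
        _ ≤ ∑' i, g i y := ENNReal.le_tsum j
    · have h0 : f y = 0 := by rw [hf]; simp [Set.indicator_of_notMem hyA]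
      simp [h0]
  have hlint : (∫⁻ y, ENNReal.ofReal (f y)) ≤ Λ := by
    calc (∫⁻ y, ENNReal.ofReal (f y)) ≤ ∫⁻ y, ∑' j, g j y := lintegral_mono hpoint
      _ = ∑' j, ∫⁻ y, g j y := lintegral_tsum (fun j => (hgm j).aemeasurable)
      _ ≤ ∑' j, ENNReal.ofReal (4*κ) * (ENNReal.ofReal ρ)^j := by
          apply ENNReal.tsum_le_tsum
          intro j
          have hind : (∫⁻ y, g j y) = ENNReal.ofReal (((4:ℝ)^j)^(-q)) *
              volume (A ∩ Metric.closedBall x (2^(j+1))) :=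
            lintegral_indicator_const (hAm.inter measurableSet_closedBall) _
          rw [hind]
          have hr1 : (1:ℝ) ≤ 2^(j+1) := one_le_pow₀ (by norm_num)
          have hstep := hvol T x (2^(j+1)) hr1
          calc ENNReal.ofReal (((4:ℝ)^j)^(-q)) * volume (A ∩ Metric.closedBall x (2^(j+1)))
              ≤ ENNReal.ofReal (((4:ℝ)^j)^(-q)) * ENNReal.ofReal (κ * ((2:ℝ)^(j+1))^2) := by
                exact mul_le_mul_right hstep _
            _ = ENNReal.ofReal ((((4:ℝ)^j)^(-q)) * (κ * ((2:ℝ)^(j+1))^2)) := by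
                rw [← ENNReal.ofReal_mul (Real.rpow_nonneg (by positivity) _)]
            _ = ENNReal.ofReal (4*κ*ρ^j) := by
                congr 1
                have e3 : ((4:ℝ)^j)^(-q) = (4:ℝ)^((j:ℝ)*(-q)) := by
                  rw [← Real.rpow_natCast (4:ℝ) j, ← Real.rpow_mul (by norm_num)]
                have e1 : ((2:ℝ)^(j+1))^2 = (4:ℝ)^(j+1) := by
                  rw [← pow_mul, mul_comm, pow_mul]; norm_num
                have e4 : (4:ℝ)^(j+1) = (4:ℝ)^(((j:ℝ))+1) := by
                  rw [← Real.rpow_natCast (4:ℝ) (j+1)]; push_cast; ring_nf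
                have e2 : ρ^j = (4:ℝ)^((1-q)*(j:ℝ)) := by
                  rw [hρdef, ← Real.rpow_natCast ((4:ℝ)^(1-q)) j,
                    ← Real.rpow_mul (by norm_num)]
                calc ((4:ℝ)^j)^(-q) * (κ * ((2:ℝ)^(j+1))^2)
                    = κ * ((4:ℝ)^((j:ℝ)*(-q)) * (4:ℝ)^((j:ℝ)+1)) := by
                      rw [e3, e1, e4]; ring
                  _ = κ * (4:ℝ)^((j:ℝ)*(-q) + ((j:ℝ)+1)) := by
                      rw [← Real.rpow_add (by norm_num : (0:ℝ) < 4)]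
                  _ = κ * (4:ℝ)^((1-q)*(j:ℝ) + 1) := by ring_nf
                  _ = κ * ((4:ℝ)^((1-q)*(j:ℝ)) * 4) := by
                      rw [Real.rpow_add (by norm_num : (0:ℝ) < 4), Real.rpow_one]
                  _ = 4*κ*ρ^j := by rw [e2]; ring
            _ = ENNReal.ofReal (4*κ) * (ENNReal.ofReal ρ)^j := by
                rw [← ENNReal.ofReal_pow hρ0, ← ENNReal.ofReal_mul (by positivity)]
      _ = ENNReal.ofReal (4*κ) * ∑' j, (ENNReal.ofReal ρ)^j := ENNReal.tsum_mul_left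
      _ = Λ := by rw [ENNReal.tsum_geometric]
  have hint : Integrable f := by
    refine ⟨hfm.aestronglyMeasurable, ?_⟩
    have : (∫⁻ y, ‖f y‖ₑ) = ∫⁻ y, ENNReal.ofReal (f y) := by
      congr 1; funext y; exact Real.enorm_eq_ofReal (hfnn y)
    rw [HasFiniteIntegral, this]
    exact lt_of_le_of_lt hlint (lt_top_iff_ne_top.mpr hΛtop)
  show (∫ y, f y) ≤ Λ.toReal
  rw [integral_eq_lintegral_of_nonneg_ae (Filter.Eventually.of_forall hfnn)
    hfm.aestronglyMeasurable]
  exact ENNReal.toReal_mono hΛtop hlint
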